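/- For every n≥0, the number of Schröder paths of length 2n having no peak at even height equals #SCH_even(n), where a peak is an up step immediately followed by a down step, and the height of a peak is the height reached by its up step. -/

import Mathlib

/-- A step of a Schröder path: up `(1,1)`, down `(1,-1)`, or double horizontal `(2,0)`. -/
inductive SStep : Type
  | up : SStep
  | down : SStep
  | hh : SStep
  deriving DecidableEq

/-- The vertical displacement of a Schröder step. -/
def SStep.val : SStep → ℤ
  | .up => 1
  | .down => -1
  | .hh => 0

/-- The horizontal displacement (width) of a Schröder step. -/
def SStep.width : SStep → ℕ
  | .up => 1
  | .down => 1
  | .hh => 2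

/-- The height of the path after its first `k` steps. -/
def sHeight (l : List SStep) (k : ℕ) : ℤ := ((l.take k).map SStep.val).sum

/-- A list of steps is a Schröder path of length `2n` if its total width is `2n`,
it never goes below the x-axis, and it ends at height 0. -/
def IsSchroeder (n : ℕ) (l : List SStep) : Prop :=
  (l.map SStep.width).sum = 2 * n ∧ (∀ k : ℕ, 0 ≤ sHeight l k) ∧ sHeight l l.length = 0

/-- All double horizontal steps of the path have even height. -/
def AllHHEven (l : List SStep) : Prop :=
  ∀ i : ℕ, l.getD i SStep.up = SStep.hh → Even (sHeight l (i + 1))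

/-- The path has no peak (an up step immediately followed by a down step) at even height,
the height of a peak being the height reached by its up step. -/
def NoEvenPeak (l : List SStep) : Prop :=
  ∀ i : ℕ, l.getD i SStep.down = SStep.up → l.getD (i + 1) SStep.up = SStep.down →
    ¬ Even (sHeight l (i + 1))

namespace SchAux

def hsum (l : List SStep) : ℤ := (l.map SStep.val).sum

def wsum (l : List SStep) : ℕ := (l.map SStep.width).sum

@[simp] lemma hsum_nil : hsum [] = 0 := rfl
@[simp] lemma hsum_cons (a : SStep) (l : List SStep) : hsum (a :: l) = a.val + hsum l := by
  simp [hsum]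
@[simp] lemma hsum_append (q p : List SStep) : hsum (q ++ p) = hsum q + hsum p := by
  simp [hsum]
@[simp] lemma wsum_nil : wsum [] = 0 := rfl
@[simp] lemma wsum_cons (a : SStep) (l : List SStep) : wsum (a :: l) = a.width + wsum l := by
  simp [wsum]
@[simp] lemma wsum_append (q p : List SStep) : wsum (q ++ p) = wsum q + wsum p := by
  simp [wsum]

lemma sHeight_eq (l : List SStep) (k : ℕ) : sHeight l k = hsum (l.take k) := rfl

@[simp] lemma sHeight_zero (l : List SStep) : sHeight l 0 = 0 := rfl
@[simp] lemma sHeight_nil (k : ℕ) : sHeight [] k = 0 := by simp [sHeight]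
@[simp] lemma sHeight_cons (a : SStep) (l : List SStep) (k : ℕ) :
    sHeight (a :: l) (k + 1) = a.val + sHeight l k := by
  simp [sHeight]

lemma sHeight_of_le {l : List SStep} {k : ℕ} (h : l.length ≤ k) : sHeight l k = hsum l := by
  rw [sHeight_eq, List.take_of_length_le h]

@[simp] lemma sHeight_length (l : List SStep) : sHeight l l.length = hsum l :=
  sHeight_of_le le_rfl

lemma sHeight_append_le {q : List SStep} (p : List SStep) {k : ℕ} (h : k ≤ q.length) :
    sHeight (q ++ p) k = sHeight q k := by
  rw [sHeight_eq, sHeight_eq, List.take_append_of_le_length h]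

lemma sHeight_append_add (q p : List SStep) (k : ℕ) :
    sHeight (q ++ p) (q.length + k) = hsum q + sHeight p k := by
  rw [sHeight_eq, List.take_append, hsum_append, sHeight_eq]
  rw [List.take_of_length_le (by omega), Nat.add_sub_cancel_left]

lemma sHeight_succ {l : List SStep} {k : ℕ} (d : SStep) (h : k < l.length) :
    sHeight l (k + 1) = sHeight l k + (l.getD k d).val := by
  rw [sHeight_eq, sHeight_eq, List.getD_eq_getElem l d h]
  simp only [hsum, List.map_take]
  rw [List.sum_take_succ _ _ (by simpa using h)]
  simp

/-- Nonnegative balanced paths. -/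
inductive Bal : List SStep → Prop
  | nil : Bal []
  | hh {p : List SStep} : Bal p → Bal (.hh :: p)
  | step {q p : List SStep} : Bal q → Bal p → Bal (.up :: q ++ .down :: p)

/-- split at first return to level 0 (`d` is current depth). -/
def spl : ℕ → List SStep → List SStep × List SStep
  | _, [] => ([], [])
  | 0, .down :: r => ([], r)
  | d+1, .down :: r => ((spl d r).1.cons .down, (spl d r).2)
  | d, .up :: r => ((spl (d+1) r).1.cons .up, (spl (d+1) r).2)
  | d, .hh :: r => ((spl d r).1.cons .hh, (spl d r).2)

lemma spl_len (d : ℕ) (r : List SStep) :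
    (spl d r).1.length ≤ r.length ∧ (spl d r).2.length ≤ r.length := by
  induction d, r using spl.induct <;> simp [spl] <;> omega

lemma spl_bal {q : List SStep} (hq : Bal q) :
    ∀ (d : ℕ) (rest : List SStep),
      spl d (q ++ rest) = ((q ++ (spl d rest).1), (spl d rest).2) := by
  induction hq with
  | nil => intro d rest; simp
  | hh _ ih =>
      intro d rest
      cases d <;> simp [spl, ih]
  | step _ _ ihq ihp =>
      intro d rest
      cases d <;>
        simp [spl, List.cons_append, List.append_assoc, ihq, ihp]

lemma spl_decomp {q : List SStep} (hq : Bal q) (p : List SStep) :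
    spl 0 (q ++ .down :: p) = (q, p) := by
  have := spl_bal hq 0 (.down :: p)
  simpa [spl] using this

/-- The bijection: `F false` maps no-even-peak paths to all-hh-even paths. -/
def F (b : Bool) : List SStep → List SStep
  | [] => []
  | .hh :: p => if b then .up :: .down :: F b p else .hh :: F b p
  | .up :: r => .up :: F (!b) (spl 0 r).1 ++ .down :: F b (spl 0 r).2
  | .down :: r => .down :: F b r
termination_by l => l.length
decreasing_by
  all_goals (first
    | (have := spl_len 0 r; simp; omega)
    | (simp; omega)
    | simp)

/-- The inverse map. -/
def G (b : Bool) : List SStep → List SStep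
  | [] => []
  | .hh :: p => .hh :: G b p
  | .up :: r =>
      if b ∧ (spl 0 r).1 = [] then .hh :: G b (spl 0 r).2
      else .up :: G (!b) (spl 0 r).1 ++ .down :: G b (spl 0 r).2
  | .down :: r => .down :: G b r
termination_by l => l.length
decreasing_by
  all_goals (first
    | (have := spl_len 0 r; simp; omega)
    | (simp; omega)
    | simp)

@[simp] lemma F_nil (b : Bool) : F b [] = [] := by simp [F]
lemma F_hh (b : Bool) (p : List SStep) :
    F b (.hh :: p) = if b then .up :: .down :: F b p else .hh :: F b p := by
  rw [F]
lemma F_hh_false (p : List SStep) : F false (.hh :: p) = .hh :: F false p := by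
  rw [F_hh]; rfl
lemma F_hh_true (p : List SStep) : F true (.hh :: p) = .up :: .down :: F true p := by
  rw [F_hh]; rfl
lemma F_up (b : Bool) (r : List SStep) :
    F b (.up :: r) = .up :: F (!b) (spl 0 r).1 ++ .down :: F b (spl 0 r).2 := by
  rw [F]

@[simp] lemma G_nil (b : Bool) : G b [] = [] := by simp [G]
lemma G_hh (b : Bool) (p : List SStep) : G b (.hh :: p) = .hh :: G b p := by rw [G]
lemma G_up (b : Bool) (r : List SStep) :
    G b (.up :: r) = if b ∧ (spl 0 r).1 = [] then .hh :: G b (spl 0 r).2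
      else .up :: G (!b) (spl 0 r).1 ++ .down :: G b (spl 0 r).2 := by
  rw [G]

/-- grammar for no-peak-at-parity-`b` paths. -/
inductive NP : Bool → List SStep → Prop
  | nil {b} : NP b []
  | hh {b : Bool} {p} : NP b p → NP b (.hh :: p)
  | step {b : Bool} {q p} : NP (!b) q → NP b p → (b = true → q ≠ []) →
      NP b (.up :: q ++ .down :: p)

/-- grammar for all-hh-at-parity-`b` paths. -/
inductive HE : Bool → List SStep → Prop
  | nil {b} : HE b []
  | hh {p} : HE false p → HE false (.hh :: p)
  | step {b : Bool} {q p} : HE (!b) q → HE b p → HE b (.up :: q ++ .down :: p)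

lemma NP_bal {b l} (h : NP b l) : Bal l := by
  induction h with
  | nil => exact .nil
  | hh _ ih => exact .hh ih
  | step _ _ _ ihq ihp => exact .step ihq ihp

lemma HE_bal {b l} (h : HE b l) : Bal l := by
  induction h with
  | nil => exact .nil
  | hh _ ih => exact .hh ih
  | step _ _ ihq ihp => exact .step ihq ihp

lemma F_ne_nil {b : Bool} {l : List SStep} (h : l ≠ []) : F b l ≠ [] := by
  match l with
  | .hh :: p => rw [F_hh]; split <;> simp
  | .up :: r => rw [F_up]; simp
  | .down :: r => rw [F]; simp

lemma G_ne_nil {b : Bool} {l : List SStep} (h : l ≠ []) : G b l ≠ [] := by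
  match l with
  | .hh :: p => rw [G_hh]; simp
  | .up :: r => rw [G_up]; split <;> simp
  | .down :: r => rw [G]; simp

lemma NP_to_HE {b l} (h : NP b l) :
    HE b (F b l) ∧ G b (F b l) = l ∧ wsum (F b l) = wsum l := by
  induction h with
  | nil => simp [HE.nil]
  | @hh b p _ ih =>
      cases b with
      | false =>
          rw [F_hh_false]
          exact ⟨.hh ih.1, by rw [G_hh, ih.2.1], by simp [ih.2.2]⟩
      | true =>
          rw [F_hh_true]
          refine ⟨?_, ?_, ?_⟩
          · exact (show HE true (.up :: [] ++ .down :: F true p) from .step .nil ih.1)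
          · rw [G_up]; simp [spl, ih.2.1]
          · simp [SStep.width, ih.2.2]; omega
  | @step b q p hq hp hne ihq ihp =>
      rw [show (SStep.up :: q ++ SStep.down :: p) = .up :: (q ++ .down :: p) by simp,
        F_up, spl_decomp (NP_bal hq)]
      refine ⟨.step ihq.1 ihp.1, ?_, ?_⟩
      · rw [show (SStep.up :: F (!b) q ++ SStep.down :: F b p)
            = .up :: (F (!b) q ++ .down :: F b p) by simp,
          G_up, spl_decomp (HE_bal ihq.1)]
        have hne' : ¬ (b = true ∧ F (!b) q = []) := by
          rintro ⟨rfl, h2⟩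
          exact F_ne_nil (hne rfl) h2
        rw [if_neg (by simpa using hne'), ihq.2.1, ihp.2.1]
        simp
      · simp [ihq.2.2, ihp.2.2, SStep.width]

lemma HE_to_NP {b l} (h : HE b l) :
    NP b (G b l) ∧ F b (G b l) = l ∧ wsum (G b l) = wsum l := by
  induction h with
  | nil => simp [NP.nil]
  | @hh p _ ih =>
      rw [G_hh]
      refine ⟨.hh ih.1, ?_, by simp [ih.2.2]⟩
      rw [F_hh_false, ih.2.1]
  | @step b q p hq hp ihq ihp =>
      rw [show (SStep.up :: q ++ SStep.down :: p) = .up :: (q ++ .down :: p) by simp,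
        G_up, spl_decomp (HE_bal hq)]
      by_cases hc : b = true ∧ q = []
      · rw [if_pos hc]
        obtain ⟨rfl, rfl⟩ := hc
        refine ⟨.hh ihp.1, ?_, by simp [SStep.width, ihp.2.2]; omega⟩
        rw [F_hh_true, ihp.2.1]; simp
      · rw [if_neg hc]
        refine ⟨?_, ?_, by simp [ihq.2.2, ihp.2.2]⟩
        · exact .step ihq.1 ihp.1 (fun hb => by
            rintro h2
            exact hc ⟨hb, by simpa [h2] using G_ne_nil (b := !b) (l := q)⟩)
        · rw [show (SStep.up :: G (!b) q ++ SStep.down :: G b p)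
              = .up :: (G (!b) q ++ .down :: G b p) by simp,
            F_up, spl_decomp (NP_bal ihq.1), ihq.2.1, ihp.2.1]
          simp

def par (b : Bool) : ℤ := if b then 1 else 0

/-- no peak at relative parity `b`. -/
def NPa (b : Bool) (l : List SStep) : Prop :=
  ∀ i : ℕ, l.getD i .down = .up → l.getD (i + 1) .up = .down →
    ¬ Even (sHeight l (i + 1) + par b)

/-- every hh at relative parity `b`. -/
def HEa (b : Bool) (l : List SStep) : Prop :=
  ∀ i : ℕ, l.getD i .up = .hh → Even (sHeight l (i + 1) + par b)

lemma even_flip (x : ℤ) (b : Bool) : Even (1 + x + par b) ↔ Even (x + par !b) := by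
  cases b <;> simp only [par, Int.even_iff, Bool.not_true, Bool.not_false, Bool.false_eq_true, if_true, if_false] <;> omega

lemma getD_up_lt {l : List SStep} {j : ℕ} (h : l.getD j .down = .up) : j < l.length := by
  by_contra hc
  rw [List.getD_eq_default _ _ (le_of_not_gt hc)] at h
  cases h

lemma getD_down_lt {l : List SStep} {j : ℕ} (h : l.getD j .up = .down) : j < l.length := by
  by_contra hc
  rw [List.getD_eq_default _ _ (le_of_not_gt hc)] at h
  cases h

lemma getD_hh_lt {l : List SStep} {j : ℕ} (h : l.getD j .up = .hh) : j < l.length := by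
  by_contra hc
  rw [List.getD_eq_default _ _ (le_of_not_gt hc)] at h
  cases h

lemma bal_props {l : List SStep} (h : Bal l) : (∀ k, 0 ≤ sHeight l k) ∧ hsum l = 0 := by
  induction h with
  | nil => simp
  | @hh p _ ih =>
      refine ⟨fun k => ?_, by simp [ih.2, SStep.val]⟩
      cases k with
      | zero => simp
      | succ k => rw [sHeight_cons]; have := ih.1 k; simp [SStep.val]; omega
  | @step q p _ _ ihq ihp =>
      constructor
      · intro k
        cases k with
        | zero => simp
        | succ k =>
            rw [show (SStep.up :: q ++ SStep.down :: p) = .up :: (q ++ .down :: p) by simp,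
              sHeight_cons]
            rcases le_or_gt k q.length with hk | hk
            · rw [sHeight_append_le _ hk]
              have := ihq.1 k
              simp [SStep.val]; omega
            · obtain ⟨j, hj⟩ : ∃ j, k = q.length + (j + 1) :=
                ⟨k - q.length - 1, by omega⟩
              rw [hj, sHeight_append_add, sHeight_cons]
              have := ihp.1 j
              simp [SStep.val, ihq.2]; omega
      · simp [ihq.2, ihp.2, SStep.val]

section decomp

variable {q p : List SStep} {b : Bool}

private lemma lcons : (SStep.up :: q ++ SStep.down :: p) = .up :: (q ++ .down :: p) := by simp

lemma g1 {j : ℕ} (hj : j < q.length) (d : SStep) :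
    (SStep.up :: q ++ SStep.down :: p).getD (j + 1) d = q.getD j d := by
  rw [lcons, List.getD_cons_succ, List.getD_append _ _ _ _ hj]

lemma g2 (d : SStep) : (SStep.up :: q ++ SStep.down :: p).getD (q.length + 1) d = .down := by
  rw [lcons, List.getD_cons_succ, List.getD_append_right _ _ _ _ le_rfl]
  simp

lemma g3 (j : ℕ) (d : SStep) :
    (SStep.up :: q ++ SStep.down :: p).getD (q.length + 2 + j) d = p.getD j d := by
  rw [show q.length + 2 + j = (q.length + 1 + j) + 1 by omega, lcons, List.getD_cons_succ,
    List.getD_append_right _ _ _ _ (by omega)]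
  rw [show q.length + 1 + j - q.length = j + 1 by omega, List.getD_cons_succ]

lemma s1 {k : ℕ} (hk : k ≤ q.length) :
    sHeight (SStep.up :: q ++ SStep.down :: p) (k + 1) = 1 + sHeight q k := by
  rw [lcons, sHeight_cons, sHeight_append_le _ hk]
  simp [SStep.val]

lemma s2 (hq : hsum q = 0) (k : ℕ) :
    sHeight (SStep.up :: q ++ SStep.down :: p) (q.length + 2 + k) = sHeight p k := by
  rw [show q.length + 2 + k = (q.length + (1 + k)) + 1 by omega, lcons, sHeight_cons,
    sHeight_append_add]
  rw [show 1 + k = k + 1 by omega, sHeight_cons]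
  simp [SStep.val, hq]

lemma len_decomp : (SStep.up :: q ++ SStep.down :: p).length = q.length + 2 + p.length := by
  simp; omega

end decomp

lemma NPa_hh {b : Bool} {p : List SStep} : NPa b (.hh :: p) ↔ NPa b p := by
  constructor
  · intro h j h1 h2
    have := h (j + 1) (by rwa [List.getD_cons_succ]) (by rwa [List.getD_cons_succ])
    rwa [sHeight_cons, show SStep.hh.val = 0 from rfl, zero_add] at this
  · intro h i h1 h2
    cases i with
    | zero => simp [List.getD] at h1
    | succ j =>
        rw [List.getD_cons_succ] at h1 h2
        have := h j h1 h2
        rwa [sHeight_cons, show SStep.hh.val = 0 from rfl, zero_add]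

lemma HEa_hh {b : Bool} {p : List SStep} : HEa b (.hh :: p) ↔ (b = false ∧ HEa b p) := by
  constructor
  · intro h
    have h0 := h 0 (by simp [List.getD])
    simp only [sHeight_cons, sHeight_zero] at h0
    have hb : b = false := by
      cases b
      · rfl
      · exfalso; revert h0; simp [par, SStep.val, Int.even_iff]
    refine ⟨hb, fun j h1 => ?_⟩
    have := h (j + 1) (by rwa [List.getD_cons_succ])
    rwa [sHeight_cons, show SStep.hh.val = 0 from rfl, zero_add] at this
  · rintro ⟨rfl, h⟩ i h1
    cases i with
    | zero => simp [par, SStep.val, Int.even_iff]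
    | succ j =>
        rw [List.getD_cons_succ] at h1
        have := h j h1
        rwa [sHeight_cons, show SStep.hh.val = 0 from rfl, zero_add]

lemma NPa_step {b : Bool} {q p : List SStep} (hq : Bal q) :
    NPa b (.up :: q ++ .down :: p) ↔
      (NPa (!b) q ∧ NPa b p ∧ (b = true → q ≠ [])) := by
  obtain ⟨hnn, hs⟩ := bal_props hq
  constructor
  · intro h
    refine ⟨?_, ?_, ?_⟩
    · intro j h1 h2
      have hj2 : j + 1 < q.length := getD_down_lt h2
      have := h (j + 1) (by rw [g1 (by omega)]; exact h1) (by rw [g1 hj2]; exact h2)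
      rw [s1 (by omega)] at this
      rw [← even_flip]
      exact this
    · intro j h1 h2
      have := h (q.length + 2 + j) (by rw [g3]; exact h1)
        (by rw [show q.length + 2 + j + 1 = q.length + 2 + (j + 1) by omega, g3]; exact h2)
      rwa [show q.length + 2 + j + 1 = q.length + 2 + (j + 1) by omega, s2 hs] at this
    · rintro rfl rfl
      have := h 0 (by simp [List.getD]) (by simp [List.getD])
      rw [s1 (by simp)] at this
      revert this
      simp [par, Int.even_iff]
  · rintro ⟨Hq, Hp, Hb⟩ i h1 h2
    rcases i with _ | j
    · -- i = 0
      rcases hq0 : q with _ | ⟨c, q''⟩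
      · subst hq0
        cases b
        · rw [s1 (by simp)]; simp [par, Int.even_iff]
        · exact absurd rfl (Hb rfl)
      · exfalso
        subst hq0
        rw [g1 (by simp)] at h2
        rw [List.getD_cons_zero] at h2
        have h3 := hnn 1
        rw [show (1:ℕ) = 0 + 1 from rfl, sHeight_cons, h2] at h3
        simp [SStep.val] at h3
    · -- i = j + 1
      rcases lt_trichotomy (j + 1) q.length with hlt | heq | hgt
      · rw [g1 (by omega)] at h1
        rw [g1 hlt] at h2
        have hres := Hq j h1 h2
        rw [s1 (le_of_lt hlt), even_flip]
        exact hres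
      · exfalso
        rw [g1 (by omega)] at h1
        have hstep := sHeight_succ (l := q) SStep.down (by omega : j < q.length)
        rw [h1] at hstep
        have h4 : sHeight q (j + 1) = 0 := by rw [heq, sHeight_length, hs]
        have h5 := hnn j
        simp [SStep.val] at hstep
        omega
      · by_cases hj : j = q.length
        · exfalso
          subst hj
          rw [g2] at h1
          simp at h1
        · obtain ⟨k, hk⟩ : ∃ k, j + 1 = q.length + 2 + k := ⟨j + 1 - (q.length + 2), by omega⟩
          rw [hk, g3] at h1
          rw [show j + 1 + 1 = q.length + 2 + (k + 1) by omega, g3] at h2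
          have hres := Hp k h1 h2
          rw [show j + 1 + 1 = q.length + 2 + (k + 1) by omega, s2 hs]
          exact hres
lemma HEa_step {b : Bool} {q p : List SStep} (hq : Bal q) :
    HEa b (.up :: q ++ .down :: p) ↔ (HEa (!b) q ∧ HEa b p) := by
  obtain ⟨hnn, hs⟩ := bal_props hq
  constructor
  · intro h
    constructor
    · intro j h1
      have hj : j < q.length := getD_hh_lt h1
      have := h (j + 1) (by rw [g1 hj]; exact h1)
      rw [s1 (by omega)] at this
      exact (even_flip _ _).mp this
    · intro j h1
      have := h (q.length + 2 + j) (by rw [g3]; exact h1)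
      rwa [show q.length + 2 + j + 1 = q.length + 2 + (j + 1) by omega, s2 hs] at this
  · rintro ⟨Hq, Hp⟩ i h1
    rcases i with _ | j
    · rw [lcons, List.getD_cons_zero] at h1
      cases h1
    · rcases lt_trichotomy j q.length with hlt | heq | hgt
      · rw [g1 hlt] at h1
        rw [s1 (by omega)]
        exact (even_flip _ _).mpr (Hq j h1)
      · exfalso
        subst heq
        rw [g2] at h1
        cases h1
      · obtain ⟨k, hk⟩ : ∃ k, j + 1 = q.length + 2 + k := ⟨j + 1 - (q.length + 2), by omega⟩
        rw [hk, g3] at h1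
        rw [show j + 1 + 1 = q.length + 2 + (k + 1) by omega, s2 hs]
        exact Hp k h1

lemma s_take {r : List SStep} {n k : ℕ} (h : k ≤ n) : sHeight (r.take n) k = sHeight r k := by
  rw [sHeight_eq, sHeight_eq, List.take_take, min_eq_left h]

lemma bal_of_aux : ∀ (N : ℕ) (l : List SStep), l.length ≤ N →
    (∀ k, 0 ≤ sHeight l k) → hsum l = 0 → Bal l := by
  intro N
  induction N with
  | zero =>
      intro l hl _ _
      rw [List.length_eq_zero_iff.mp (Nat.le_zero.mp hl)]
      exact .nil
  | succ N ih =>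
      intro l hl hnn hs
      match l with
      | [] => exact .nil
      | .hh :: p =>
          refine .hh (ih p (by simp at hl; omega) (fun k => ?_) (by simpa [SStep.val] using hs))
          have := hnn (k + 1)
          rwa [sHeight_cons, show SStep.hh.val = 0 from rfl, zero_add] at this
      | .down :: p =>
          exfalso
          have := hnn 1
          rw [show (1 : ℕ) = 0 + 1 from rfl, sHeight_cons] at this
          simp [SStep.val] at this
      | .up :: r =>
          set l := SStep.up :: r with hldef
          have hex : ∃ k, sHeight l (k + 1) = 0 :=
            ⟨r.length, by rw [show r.length + 1 = l.length by rw [hldef, List.length_cons], sHeight_length]; exact hs⟩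
          set m := Nat.find hex with hmdef
          have hm : sHeight l (m + 1) = 0 := Nat.find_spec hex
          have hmin : ∀ k < m, sHeight l (k + 1) ≠ 0 := fun k hk => Nat.find_min hex hk
          have h1m : 1 ≤ m := by
            rcases Nat.eq_zero_or_pos m with h0 | h
            · exfalso
              rw [h0, sHeight_cons] at hm
              simp [SStep.val] at hm
            · exact h
          have hmle : m ≤ r.length :=
            Nat.find_min' hex (by rw [show r.length + 1 = l.length by rw [hldef, List.length_cons], sHeight_length]; exact hs)
          have hpos : ∀ k, 1 ≤ k → k ≤ m → 1 ≤ sHeight l k := by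
            intro k hk1 hk2
            have h1 := hnn k
            have h2 := hmin (k - 1) (by omega)
            rw [show k - 1 + 1 = k by omega] at h2
            omega
          have hmlen : m < l.length := by simp [hldef]; omega
          have hstep := sHeight_succ (l := l) SStep.up hmlen
          have hsm : sHeight l m = 1 ∧ l.getD m SStep.up = SStep.down := by
            have h1 := hpos m h1m le_rfl
            rcases ha : l.getD m SStep.up with _ | _ | _ <;>
              rw [ha] at hstep <;> simp [SStep.val] at hstep <;>
              first
                | (exfalso; omega)
                | exact ⟨by omega, rfl⟩
          set q : List SStep := r.take (m - 1) with hqdef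
          set p' : List SStep := r.drop m with hpdef
          have hql : q.length = m - 1 := by
            rw [hqdef, List.length_take]; omega
          have hrm : r[m - 1]'(by omega) = SStep.down := by
            have := hsm.2
            rw [show m = (m - 1) + 1 by omega, hldef, List.getD_cons_succ,
              List.getD_eq_getElem _ _ (by omega : m - 1 < r.length)] at this
            exact this
          have hr : r = q ++ .down :: p' := by
            conv_lhs => rw [← List.take_append_drop (m - 1) r]
            rw [List.drop_eq_getElem_cons (by omega : m - 1 < r.length), hrm,
              show m - 1 + 1 = m by omega]
          have hl2 : l = .up :: q ++ .down :: p' := by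
            rw [hldef, hr]; simp
          have hq_nn_le : ∀ k, k ≤ m - 1 → 0 ≤ sHeight q k := by
            intro k hk
            rw [hqdef, s_take hk]
            have h2 := hpos (k + 1) (by omega) (by omega)
            rw [hldef, sHeight_cons] at h2
            simp [SStep.val] at h2
            omega
          have hq_hsum : hsum q = 0 := by
            have e1 : hsum q = sHeight q (m - 1) := by
              rw [← hql, sHeight_length]
            rw [e1, hqdef, s_take le_rfl]
            have h2 : sHeight l ((m - 1) + 1) = 1 + sHeight r (m - 1) := by
              rw [hldef, sHeight_cons]; simp [SStep.val]
            rw [show m - 1 + 1 = m by omega] at h2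
            rw [hsm.1] at h2
            omega
          have hq_nn : ∀ k, 0 ≤ sHeight q k := by
            intro k
            rcases le_or_gt k (m - 1) with hk | hk
            · exact hq_nn_le k hk
            · rw [sHeight_of_le (by omega), hq_hsum]
          have hp_nn : ∀ k, 0 ≤ sHeight p' k := by
            intro k
            have := hnn (q.length + 2 + k)
            rwa [hl2, s2 hq_hsum] at this
          have hp_hsum : hsum p' = 0 := by
            have : hsum l = hsum p' := by
              rw [hl2]
              simp [SStep.val, hq_hsum]
            omega
          rw [hl2]
          have hrlen : r.length ≤ N := by simp [hldef] at hl; omega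
          exact .step (ih q (by omega) hq_nn hq_hsum)
            (ih p' (by rw [hpdef]; simp; omega) hp_nn hp_hsum)

lemma Bal_iff {l : List SStep} : Bal l ↔ ((∀ k, 0 ≤ sHeight l k) ∧ hsum l = 0) :=
  ⟨bal_props, fun h => bal_of_aux l.length l le_rfl h.1 h.2⟩

lemma NPa_nil (b : Bool) : NPa b [] := by
  intro i h1 _
  simp [List.getD] at h1

lemma HEa_nil (b : Bool) : HEa b [] := by
  intro i h1
  simp [List.getD] at h1

lemma NP_iff {b : Bool} {l : List SStep} : NP b l ↔ (Bal l ∧ NPa b l) := by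
  constructor
  · intro h
    induction h with
    | nil => exact ⟨.nil, NPa_nil _⟩
    | hh _ ih => exact ⟨.hh ih.1, NPa_hh.mpr ih.2⟩
    | @step b q p hq hp hne ihq ihp =>
        exact ⟨.step ihq.1 ihp.1, (NPa_step (NP_bal hq)).mpr ⟨ihq.2, ihp.2, hne⟩⟩
  · rintro ⟨hb, hn⟩
    induction hb generalizing b with
    | nil => exact .nil
    | hh _ ih => exact .hh (ih (NPa_hh.mp hn))
    | @step q p hq hp ihq ihp =>
        obtain ⟨h1, h2, h3⟩ := (NPa_step hq).mp hn
        exact .step (ihq h1) (ihp h2) h3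

lemma HE_iff {b : Bool} {l : List SStep} : HE b l ↔ (Bal l ∧ HEa b l) := by
  constructor
  · intro h
    induction h with
    | nil => exact ⟨.nil, HEa_nil _⟩
    | hh _ ih => exact ⟨.hh ih.1, HEa_hh.mpr ⟨rfl, ih.2⟩⟩
    | @step b q p hq hp ihq ihp =>
        exact ⟨.step ihq.1 ihp.1, (HEa_step (HE_bal hq)).mpr ⟨ihq.2, ihp.2⟩⟩
  · rintro ⟨hb, hn⟩
    induction hb generalizing b with
    | nil => exact .nil
    | hh _ ih =>
        obtain ⟨rfl, h2⟩ := HEa_hh.mp hn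
        exact .hh (ih h2)
    | @step q p hq hp ihq ihp =>
        obtain ⟨h1, h2⟩ := (HEa_step hq).mp hn
        exact .step (ihq h1) (ihp h2)

lemma noEvenPeak_iff {l : List SStep} : NoEvenPeak l ↔ NPa false l := by
  simp [NoEvenPeak, NPa, par]

lemma allHHEven_iff {l : List SStep} : AllHHEven l ↔ HEa false l := by
  simp [AllHHEven, HEa, par]

lemma isSchroeder_iff {n : ℕ} {l : List SStep} :
    IsSchroeder n l ↔ (Bal l ∧ wsum l = 2 * n) := by
  constructor
  · rintro ⟨h1, h2, h3⟩
    rw [sHeight_length] at h3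
    exact ⟨Bal_iff.mpr ⟨h2, h3⟩, h1⟩
  · rintro ⟨h1, h2⟩
    obtain ⟨hnn, hs⟩ := bal_props h1
    exact ⟨h2, hnn, by rw [sHeight_length]; exact hs⟩

lemma mem_A_iff {n : ℕ} {l : List SStep} :
    (IsSchroeder n l ∧ NoEvenPeak l) ↔ (NP false l ∧ wsum l = 2 * n) := by
  rw [isSchroeder_iff, noEvenPeak_iff, NP_iff]
  tauto

lemma mem_B_iff {n : ℕ} {l : List SStep} :
    (IsSchroeder n l ∧ AllHHEven l) ↔ (HE false l ∧ wsum l = 2 * n) := by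
  rw [isSchroeder_iff, allHHEven_iff, HE_iff]
  tauto

end SchAux

/-- The number of Schröder paths of length `2n` with no peak at even height equals
`#SCH_even(n)`. -/
theorem schroeder_no_even_peak_eq_schroeder_even (n : ℕ) :
    Nat.card {l : List SStep // IsSchroeder n l ∧ NoEvenPeak l} =
      Nat.card {l : List SStep // IsSchroeder n l ∧ AllHHEven l} := by
  apply Nat.card_congr
  refine
    { toFun := fun x => ⟨SchAux.F false x.1, ?_⟩
      invFun := fun x => ⟨SchAux.G false x.1, ?_⟩
      left_inv := ?_
      right_inv := ?_ }
  · obtain ⟨hnp, hw⟩ := SchAux.mem_A_iff.mp x.2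
    obtain ⟨h1, _, h3⟩ := SchAux.NP_to_HE hnp
    exact SchAux.mem_B_iff.mpr ⟨h1, by rw [h3]; exact hw⟩
  · obtain ⟨hhe, hw⟩ := SchAux.mem_B_iff.mp x.2
    obtain ⟨h1, _, h3⟩ := SchAux.HE_to_NP hhe
    exact SchAux.mem_A_iff.mpr ⟨h1, by rw [h3]; exact hw⟩
  · rintro ⟨l, hl⟩
    obtain ⟨hnp, _⟩ := SchAux.mem_A_iff.mp hl
    exact Subtype.ext (SchAux.NP_to_HE hnp).2.1
  · rintro ⟨l, hl⟩
    obtain ⟨hhe, _⟩ := SchAux.mem_B_iff.mp hl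
    exact Subtype.ext (SchAux.HE_to_NP hhe).2.1
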